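/- Let ε > 0 and set M := 1 + (2π)^{-d/2} e^{2κ} ‖φ‖_{L¹(ℝ^d)}. If |F(t)| ≤ ε for every real t ≥ -1, then for every real t > 0 one has |(2π)^{-d/2} ∫_{ℝ^d} e^{-i t (x·ξ)} φ(x) dx| ≤ M · (4 + t²)^{s/2} · t^{-s} · ε^{(2/π) arctan(1/t)}. -/

import Mathlib

set_option maxHeartbeats 1000000

open Complex Real MeasureTheory

theorem stmt4
    (d : ℕ) (hd : 1 ≤ d) (ξ : EuclideanSpace ℝ (Fin d)) (hξ : ‖ξ‖ = 1)
    (κ : ℝ) (hκ : 0 < κ) (s : ℕ)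
    (φ : EuclideanSpace ℝ (Fin d) → ℂ) (hφ : Integrable φ)
    (hsupp : ∀ x, x ∉ Metric.closedBall (0 : EuclideanSpace ℝ (Fin d)) κ → φ x = 0)
    (F : ℂ → ℂ)
    (hF : ∀ z : ℂ, F z = (z / (2 + z)) ^ s * Complex.exp (-(κ : ℂ) * z) *
      (((2 * Real.pi) ^ (-(d : ℝ) / 2) : ℝ) : ℂ) *
      ∫ x, Complex.exp (z * ((inner ℝ x ξ : ℝ) : ℂ)) * φ x)
    (M : ℝ) (hM : M = 1 + (2 * Real.pi) ^ (-(d : ℝ) / 2) * Real.exp (2 * κ) * ∫ x, ‖φ x‖)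
    (ε : ℝ) (hε : 0 < ε)
    (hFε : ∀ t : ℝ, -1 ≤ t → ‖F ((t : ℝ) : ℂ)‖ ≤ ε) :
    ∀ t : ℝ, 0 < t →
      ‖(((2 * Real.pi) ^ (-(d : ℝ) / 2) : ℝ) : ℂ) *
          ∫ x, Complex.exp (-Complex.I * (t : ℂ) * ((inner ℝ x ξ : ℝ) : ℂ)) * φ x‖ ≤
        M * (4 + t ^ 2) ^ ((s : ℝ) / 2) * t ^ (-(s : ℝ)) *
          ε ^ ((2 / Real.pi) * Real.arctan (1 / t)) := by
  set C₂ : ℝ := (2 * Real.pi) ^ (-(d : ℝ) / 2) with hC₂def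
  have hC₂ : 0 < C₂ := Real.rpow_pos_of_pos (by positivity) _
  set N : ℝ := ∫ x, ‖φ x‖ with hNdef
  have hN : 0 ≤ N := integral_nonneg fun x => norm_nonneg _
  set B : ℝ := C₂ * Real.exp (2 * κ) * N with hBdef
  have hB0 : 0 ≤ B := by positivity
  have hMB : M = 1 + B := hM
  have hM1 : 1 ≤ M := by rw [hMB]; linarith
  -- inner product bound on the support
  have ha : ∀ x, φ x ≠ 0 → |(inner ℝ x ξ : ℝ)| ≤ κ := by
    intro x hx
    have hx' : x ∈ Metric.closedBall (0 : EuclideanSpace ℝ (Fin d)) κ := by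
      by_contra h; exact hx (hsupp x h)
    calc |(inner ℝ x ξ : ℝ)| ≤ ‖x‖ * ‖ξ‖ := abs_real_inner_le_norm x ξ
      _ ≤ κ := by rw [hξ, mul_one]; simpa [Metric.mem_closedBall, dist_zero_right] using hx'
  have hcont : Continuous fun x : EuclideanSpace ℝ (Fin d) => ((inner ℝ x ξ : ℝ) : ℂ) :=
    Complex.continuous_ofReal.comp (continuous_inner.comp
      (Continuous.prodMk continuous_id continuous_const))
  have hmeas : ∀ z : ℂ, AEStronglyMeasurable
      (fun x => Complex.exp (z * ((inner ℝ x ξ : ℝ) : ℂ)) * φ x) volume := fun z =>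
    ((Complex.continuous_exp.comp (continuous_const.mul hcont)).aestronglyMeasurable).mul hφ.1
  -- f is entire
  have hptw : ∀ (z₀ z : ℂ), z ∈ Metric.ball z₀ 1 → ∀ x,
      ‖Complex.exp (z * ((inner ℝ x ξ : ℝ) : ℂ)) * φ x‖ ≤ Real.exp ((‖z₀‖+1) * κ) * ‖φ x‖ := by
    intro z₀ z hz x
    by_cases hx : φ x = 0
    · simp [hx]
    · rw [norm_mul, Complex.norm_exp]
      gcongr
      have h1 : |(inner ℝ x ξ : ℝ)| ≤ κ := ha x hx
      have h2 : ‖z‖ ≤ ‖z₀‖ + 1 := by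
        have := mem_ball_iff_norm.mp hz
        have := norm_sub_norm_le z z₀
        linarith
      have h3 : (z * ((inner ℝ x ξ : ℝ) : ℂ)).re = z.re * (inner ℝ x ξ : ℝ) := by
        simp [Complex.mul_re]
      rw [h3]
      calc z.re * (inner ℝ x ξ : ℝ) ≤ |z.re * (inner ℝ x ξ : ℝ)| := le_abs_self _
        _ = |z.re| * |(inner ℝ x ξ : ℝ)| := abs_mul _ _
        _ ≤ ‖z‖ * κ :=
            mul_le_mul (Complex.abs_re_le_norm z) h1 (abs_nonneg _) (norm_nonneg _)
        _ ≤ (‖z₀‖+1) * κ := by gcongr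
  have hint : ∀ z : ℂ, Integrable (fun x => Complex.exp (z * ((inner ℝ x ξ : ℝ) : ℂ)) * φ x) := by
    intro z
    refine (hφ.norm.const_mul (Real.exp ((‖z‖+1) * κ))).mono' (hmeas z) ?_
    exact Filter.Eventually.of_forall (hptw z z (by simp))
  have hfd : Differentiable ℂ
      (fun z : ℂ => ∫ x, Complex.exp (z * ((inner ℝ x ξ : ℝ) : ℂ)) * φ x) := by
    intro z₀
    have key := hasDerivAt_integral_of_dominated_loc_of_deriv_le (F := fun z x =>
        Complex.exp (z * ((inner ℝ x ξ : ℝ) : ℂ)) * φ x)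
        (F' := fun z x => ((inner ℝ x ξ : ℝ) : ℂ) * Complex.exp (z * ((inner ℝ x ξ : ℝ) : ℂ)) * φ x)
        (x₀ := z₀) (bound := fun x => κ * (Real.exp ((‖z₀‖+1) * κ) * ‖φ x‖)) (Metric.ball_mem_nhds z₀ one_pos)
        (Filter.Eventually.of_forall fun z => hmeas z) (hint z₀)
        ((hcont.aestronglyMeasurable.mul ((Complex.continuous_exp.comp
          (continuous_const.mul hcont)).aestronglyMeasurable)).mul hφ.1)
        ?_ ((hφ.norm.const_mul _).const_mul κ) ?_
    · exact key.2.differentiableAt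
    · refine Filter.Eventually.of_forall fun x => fun z hz => ?_
      by_cases hx : φ x = 0
      · simp [hx]
      · show ‖((inner ℝ x ξ : ℝ) : ℂ) * Complex.exp (z * ((inner ℝ x ξ : ℝ) : ℂ)) * φ x‖ ≤ _
        rw [mul_assoc, norm_mul]
        have h2 := hptw z₀ z hz x
        have h1 : ‖((inner ℝ x ξ : ℝ) : ℂ)‖ ≤ κ := by
          rw [Complex.norm_real]; exact ha x hx
        exact mul_le_mul h1 h2 (norm_nonneg _) hκ.le
    · refine Filter.Eventually.of_forall fun x => fun z hz => ?_
      have h1 : HasDerivAt (fun z : ℂ => z * ((inner ℝ x ξ : ℝ) : ℂ)) ((inner ℝ x ξ : ℝ) : ℂ) z := by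
        simpa using (hasDerivAt_id z).mul_const ((inner ℝ x ξ : ℝ) : ℂ)
      have h2 := (h1.cexp).mul_const (φ x)
      show HasDerivAt _ (((inner ℝ x ξ : ℝ) : ℂ) * Complex.exp (z * ((inner ℝ x ξ : ℝ) : ℂ)) * φ x) z
      exact h2.congr_deriv (by ring)
  -- key global bound for re z ≥ -1
  have hkey : ∀ z : ℂ, -1 ≤ z.re → ‖F z‖ ≤ B := by
    intro z hz
    have hEf : ‖Complex.exp (-(κ : ℂ) * z) *
        ∫ x, Complex.exp (z * ((inner ℝ x ξ : ℝ) : ℂ)) * φ x‖ ≤ Real.exp (2 * κ) * N := by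
      rw [← integral_const_mul, hNdef, ← integral_const_mul]
      refine norm_integral_le_of_norm_le (hφ.norm.const_mul _)
        (Filter.Eventually.of_forall fun x => ?_)
      by_cases hx : φ x = 0
      · simp [hx]
      · rw [← mul_assoc, ← Complex.exp_add, norm_mul, Complex.norm_exp]
        gcongr
        have h1 : |(inner ℝ x ξ : ℝ)| ≤ κ := ha x hx
        have h3 : (-(κ : ℂ) * z + z * ((inner ℝ x ξ : ℝ) : ℂ)).re
            = z.re * ((inner ℝ x ξ : ℝ) - κ) := by
          simp [Complex.add_re, Complex.mul_re]; ring
        rw [h3]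
        have h4 := abs_le.mp h1
        nlinarith [(z.re + 1) * (κ - (inner ℝ x ξ : ℝ))]
    have hA1 : ‖(z / (2 + z)) ^ s‖ ≤ 1 := by
      rw [norm_pow]
      refine pow_le_one₀ (norm_nonneg _) ?_
      rw [norm_div]
      have hzn : ‖z‖ ≤ ‖2 + z‖ := by
        rw [Complex.norm_def, Complex.norm_def]
        apply Real.sqrt_le_sqrt
        simp only [Complex.normSq_apply, Complex.add_re, Complex.add_im, Complex.re_ofNat, Complex.im_ofNat]
        nlinarith [sq_nonneg z.im]
      exact div_le_one_of_le₀ hzn (norm_nonneg _)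
    have hrw : ∀ A E c w : ℂ, A * E * c * w = A * (c * (E * w)) := by intros; ring
    rw [hF z, hrw, norm_mul, norm_mul, Complex.norm_real, Real.norm_of_nonneg hC₂.le]
    calc ‖(z / (2 + z)) ^ s‖ * (C₂ * ‖_root_.id (Complex.exp (-(κ : ℂ) * z) *
          ∫ x, Complex.exp (z * ((inner ℝ x ξ : ℝ) : ℂ)) * φ x)‖)
        ≤ 1 * (C₂ * (Real.exp (2 * κ) * N)) := by
          refine mul_le_mul hA1 ?_ (by positivity) zero_le_one
          exact mul_le_mul_of_nonneg_left hEf hC₂.le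
      _ = B := by rw [hBdef]; ring
  -- setup for Hadamard three lines
  intro t ht
  set z : ℂ := -Complex.I * (t : ℂ) with hzdef
  have hFdiff : ∀ u : ℂ, 2 + u ≠ 0 → DifferentiableAt ℂ F u := by
    intro u hu
    have hFeq : F = fun z => (z / (2 + z)) ^ s * Complex.exp (-(κ : ℂ) * z) * ((C₂ : ℝ) : ℂ) *
        ∫ x, Complex.exp (z * ((inner ℝ x ξ : ℝ) : ℂ)) * φ x := funext hF
    rw [hFeq]
    have d1 : DifferentiableAt ℂ (fun u : ℂ => u / (2 + u)) u :=
      differentiableAt_fun_id.div ((differentiableAt_const _).add differentiableAt_fun_id) hu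
    have d2 : DifferentiableAt ℂ (fun u : ℂ => Complex.exp (-(κ : ℂ) * u)) u :=
      (differentiableAt_fun_id.const_mul (-(κ : ℂ))).cexp
    exact (((d1.pow s).mul d2).mul_const _).mul (hfd _)
  set w : ℂ → ℂ := fun ζ => Complex.exp (-(↑(Real.pi / 2)) * Complex.I * ζ) - 1 with hwdef
  have hu_re : ∀ ζ : ℂ, (-(↑(Real.pi / 2) : ℂ) * Complex.I * ζ).re = Real.pi / 2 * ζ.im := by
    intro ζ; simp [Complex.mul_re, Complex.mul_im]
  have hu_im : ∀ ζ : ℂ, (-(↑(Real.pi / 2) : ℂ) * Complex.I * ζ).im = -(Real.pi / 2) * ζ.re := by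
    intro ζ; simp [Complex.mul_re, Complex.mul_im]
  have hwre : ∀ ζ : ℂ, ζ.re ∈ Set.Icc (0 : ℝ) 1 → -1 ≤ (w ζ).re := by
    intro ζ hζ
    have h1 : (w ζ).re = Real.exp (Real.pi / 2 * ζ.im) * Real.cos (-(Real.pi / 2) * ζ.re) - 1 := by
      rw [hwdef]
      simp only [Complex.sub_re, Complex.exp_re, hu_re, hu_im, Complex.one_re]
    rw [h1]
    have hcos : 0 ≤ Real.cos (-(Real.pi / 2) * ζ.re) := by
      apply Real.cos_nonneg_of_mem_Icc
      constructor
      · nlinarith [Real.pi_pos, hζ.1, hζ.2]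
      · nlinarith [Real.pi_pos, hζ.1, hζ.2]
    nlinarith [Real.exp_pos (Real.pi / 2 * ζ.im), hcos,
      mul_nonneg (Real.exp_pos (Real.pi / 2 * ζ.im)).le hcos]
  have hw2 : ∀ ζ : ℂ, ζ.re ∈ Set.Icc (0 : ℝ) 1 → 2 + w ζ ≠ 0 := by
    intro ζ hζ h
    have h1 := hwre ζ hζ
    have h2 : (2 + w ζ).re = 2 + (w ζ).re := by simp [Complex.add_re]
    rw [h, Complex.zero_re] at h2
    linarith
  have hclosure : closure (Complex.HadamardThreeLines.verticalStrip 0 1)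
      ⊆ Complex.HadamardThreeLines.verticalClosedStrip 0 1 := by
    apply closure_minimal
    · intro u hu; exact ⟨(hu.1 : (0:ℝ) < u.re).le, (hu.2 : u.re < 1).le⟩
    · exact IsClosed.preimage Complex.continuous_re isClosed_Icc
  have hwdiff : Differentiable ℂ w := by
    rw [hwdef]
    exact ((differentiable_id.const_mul _).cexp).sub_const 1
  have hgd : DiffContOnCl ℂ (F ∘ w) (Complex.HadamardThreeLines.verticalStrip 0 1) := by
    apply DifferentiableOn.diffContOnCl
    intro ζ hζ
    exact ((hFdiff _ (hw2 ζ (hclosure hζ))).comp ζ (hwdiff ζ)).differentiableWithinAt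
  have hBdd : BddAbove ((norm ∘ (F ∘ w)) ''
      Complex.HadamardThreeLines.verticalClosedStrip 0 1) := by
    refine ⟨B, ?_⟩
    rintro y ⟨ζ, hζ, rfl⟩
    exact hkey _ (hwre ζ hζ)
  have hedge0 : ∀ ζ ∈ Complex.re ⁻¹' {(0 : ℝ)}, ‖(F ∘ w) ζ‖ ≤ ε := by
    intro ζ hζ
    have h0 : ζ.re = 0 := hζ
    have hwζ : w ζ = ((Real.exp (Real.pi / 2 * ζ.im) - 1 : ℝ) : ℂ) := by
      apply Complex.ext
      · rw [hwdef]
        simp only [Complex.sub_re, Complex.exp_re, hu_re, hu_im, Complex.one_re, h0,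
          Complex.ofReal_re]
        simp
      · rw [hwdef]
        simp only [Complex.sub_im, Complex.exp_im, hu_re, hu_im, Complex.one_im, h0,
          Complex.ofReal_im]
        simp
    show ‖F (w ζ)‖ ≤ ε
    rw [hwζ]
    exact hFε _ (by nlinarith [Real.exp_pos (Real.pi / 2 * ζ.im)])
  have hedge1 : ∀ ζ ∈ Complex.re ⁻¹' {(1 : ℝ)}, ‖(F ∘ w) ζ‖ ≤ B := by
    intro ζ hζ
    have h1 : ζ.re = 1 := hζ
    exact hkey _ (hwre ζ (by rw [h1]; exact ⟨zero_le_one, le_refl 1⟩))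
  set ζ₀ : ℂ := ((2 / Real.pi * Real.arctan t : ℝ) : ℂ) +
      ((1 / Real.pi * Real.log (1 + t ^ 2) : ℝ) : ℂ) * Complex.I with hζ₀def
  have hζ₀re : ζ₀.re = 2 / Real.pi * Real.arctan t := by
    rw [hζ₀def]
    simp only [Complex.add_re, Complex.ofReal_re, Complex.mul_re, Complex.ofReal_im,
      Complex.I_re, Complex.I_im]
    ring
  have hζ₀im : ζ₀.im = 1 / Real.pi * Real.log (1 + t ^ 2) := by
    rw [hζ₀def]
    simp only [Complex.add_im, Complex.ofReal_im, Complex.mul_im, Complex.ofReal_re,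
      Complex.I_re, Complex.I_im]
    ring
  have harctan_pos : 0 < Real.arctan t := by
    rw [← Real.arctan_zero]
    exact Real.arctan_strictMono ht
  have hre0 : 0 ≤ ζ₀.re := by rw [hζ₀re]; positivity
  have hre1 : ζ₀.re ≤ 1 := by
    rw [hζ₀re]
    have h1 := Real.arctan_lt_pi_div_two t
    have h2 := Real.pi_pos
    rw [div_mul_eq_mul_div, div_le_one h2]
    nlinarith
  have hmem : ζ₀ ∈ Complex.HadamardThreeLines.verticalClosedStrip 0 1 := ⟨hre0, hre1⟩
  have main := Complex.HadamardThreeLines.norm_le_interp_of_mem_verticalClosedStrip₀₁'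
    (F ∘ w) hmem hgd hBdd hedge0 hedge1
  -- w ζ₀ = z
  have hsqpos : 0 < Real.sqrt (1 + t ^ 2) := Real.sqrt_pos.2 (by positivity)
  have hpine : Real.pi ≠ 0 := Real.pi_ne_zero
  have hexps : Real.exp (Real.log (1 + t ^ 2) / 2) = Real.sqrt (1 + t ^ 2) := by
    rw [Real.sqrt_eq_rpow, Real.rpow_def_of_pos (by positivity : (0:ℝ) < 1 + t ^ 2)]
    ring_nf
  have hure : (-(↑(Real.pi / 2) : ℂ) * Complex.I * ζ₀).re = Real.log (1 + t ^ 2) / 2 := by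
    rw [hu_re, hζ₀im]; field_simp
  have huim : (-(↑(Real.pi / 2) : ℂ) * Complex.I * ζ₀).im = -Real.arctan t := by
    rw [hu_im, hζ₀re]; field_simp
  have hwz : w ζ₀ = z := by
    have hexpu : Complex.exp (-(↑(Real.pi / 2) : ℂ) * Complex.I * ζ₀) = 1 + z := by
      apply Complex.ext
      · rw [Complex.exp_re, hure, huim, hexps, Real.cos_neg, Real.cos_arctan]
        have : (1 + z).re = 1 := by rw [hzdef]; simp
        rw [this]
        field_simp
      · rw [Complex.exp_im, hure, huim, hexps, Real.sin_neg, Real.sin_arctan]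
        have : (1 + z).im = -t := by rw [hzdef]; simp
        rw [this]
        field_simp
    rw [hwdef]
    simp only [hexpu]
    ring
  have hFwz : (F ∘ w) ζ₀ = F z := by simp [Function.comp, hwz]
  rw [hFwz] at main
  -- exponent identity
  have hexp1 : 1 - ζ₀.re = 2 / Real.pi * Real.arctan (1 / t) := by
    rw [hζ₀re, one_div, Real.arctan_inv_of_pos ht]
    field_simp
  -- B ^ ζ₀.re ≤ M
  have hBM : B ^ ζ₀.re ≤ M := by
    rcases le_or_gt B 1 with h | h
    · exact (Real.rpow_le_one hB0 h hre0).trans hM1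
    · calc B ^ ζ₀.re ≤ B ^ (1 : ℝ) := Real.rpow_le_rpow_of_exponent_le h.le hre1
        _ = B := Real.rpow_one B
        _ ≤ M := by rw [hMB]; linarith
  have hεω : (0:ℝ) < ε ^ (1 - ζ₀.re) := Real.rpow_pos_of_pos hε _
  have main2 : ‖F z‖ ≤ ε ^ (1 - ζ₀.re) * M := by
    calc ‖F z‖ ≤ ε ^ (1 - ζ₀.re) * B ^ ζ₀.re := main
      _ ≤ ε ^ (1 - ζ₀.re) * M := by
          exact mul_le_mul_of_nonneg_left hBM hεω.le
  -- norms of the factors at z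
  have hnormz : ‖z‖ = t := by
    rw [hzdef]; simp [abs_of_pos ht]
  have hnorm2z : ‖2 + z‖ = Real.sqrt (4 + t ^ 2) := by
    rw [Complex.norm_def]
    congr 1
    rw [hzdef]
    simp [Complex.normSq_apply]
    ring
  have hnormE : ‖Complex.exp (-(κ : ℂ) * z)‖ = 1 := by
    rw [Complex.norm_exp]
    have : (-(κ : ℂ) * z).re = 0 := by rw [hzdef]; simp [Complex.mul_re]
    rw [this, Real.exp_zero]
  have hsq4 : 0 < Real.sqrt (4 + t ^ 2) := Real.sqrt_pos.2 (by positivity)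
  have hFzeq : ‖F z‖ = (t / Real.sqrt (4 + t ^ 2)) ^ s *
      ‖((C₂ : ℝ) : ℂ) * ∫ x, Complex.exp (z * ((inner ℝ x ξ : ℝ) : ℂ)) * φ x‖ := by
    rw [hF z, mul_assoc, norm_mul, norm_mul, hnormE, mul_one, norm_pow, norm_div,
      hnormz, hnorm2z]
  -- final arithmetic
  have hq : (0:ℝ) < (t / Real.sqrt (4 + t ^ 2)) ^ s := by positivity
  have hT : ‖((C₂ : ℝ) : ℂ) * ∫ x, Complex.exp (z * ((inner ℝ x ξ : ℝ) : ℂ)) * φ x‖ ≤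
      (ε ^ (1 - ζ₀.re) * M) / (t / Real.sqrt (4 + t ^ 2)) ^ s := by
    rw [le_div_iff₀ hq]
    calc _ = ‖F z‖ := by rw [hFzeq]; ring
      _ ≤ _ := main2
  have h4t : (4 + t ^ 2 : ℝ) ^ ((s : ℝ) / 2) = (Real.sqrt (4 + t ^ 2)) ^ s := by
    rw [Real.sqrt_eq_rpow, ← Real.rpow_natCast ((4 + t ^ 2 : ℝ) ^ ((1:ℝ) / 2)) s,
      ← Real.rpow_mul (by positivity)]
    congr 1
    ring
  have hts : t ^ (-(s : ℝ)) = ((t : ℝ) ^ s)⁻¹ := by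
    rw [Real.rpow_neg ht.le, Real.rpow_natCast]
  calc ‖((C₂ : ℝ) : ℂ) * ∫ x, Complex.exp (z * ((inner ℝ x ξ : ℝ) : ℂ)) * φ x‖
      ≤ (ε ^ (1 - ζ₀.re) * M) / (t / Real.sqrt (4 + t ^ 2)) ^ s := hT
    _ = M * (4 + t ^ 2) ^ ((s : ℝ) / 2) * t ^ (-(s : ℝ)) * ε ^ (1 - ζ₀.re) := by
        rw [h4t, hts, div_pow]
        field_simp
    _ = M * (4 + t ^ 2) ^ ((s : ℝ) / 2) * t ^ (-(s : ℝ)) *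
        ε ^ (2 / Real.pi * Real.arctan (1 / t)) := by rw [hexp1]
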